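/- Let X be a compact metric space, I an uncountable set, and for each α ∈ I let G_α be a non-Abelian group. Then the direct sum ⊕_{α∈I} G_α does not embed into Homeo(X), i.e., there is no injective group homomorphism from ⊕_{α∈I} G_α to the group of homeomorphisms of X. -/

import Mathlib

open Metric Function

variable {X : Type*}

/-- Group structure on the homeomorphism group of `X`, with `(f * g) x = f (g x)`. -/
instance instGroupHomeo [TopologicalSpace X] : Group (X ≃ₜ X) where
  mul f g := g.trans f
  one := Homeomorph.refl X
  inv := Homeomorph.symm
  mul_assoc a b c := Homeomorph.ext fun x => rfl
  one_mul a := Homeomorph.ext fun x => rfl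
  mul_one a := Homeomorph.ext fun x => rfl
  inv_mul_cancel a := Homeomorph.ext fun x => a.symm_apply_apply x

/-- The uniform metric on the homeomorphism group of a metric space. -/
noncomputable def D [MetricSpace X] (φ ψ : X ≃ₜ X) : ℝ := ⨆ x, dist (φ x) (ψ x)
/-- The direct sum of a family of groups, as the subgroup of the product
consisting of finitely supported elements. -/
def directSum (I : Type*) (G : I → Type*) [∀ i, Group (G i)] :
    Subgroup (∀ i, G i) where
  carrier := {f | {i | f i ≠ 1}.Finite}
  one_mem' := by simp
  mul_mem' := by
    intro a b ha hb
    refine (Set.Finite.union ha hb).subset ?_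
    intro i hi
    by_contra h
    simp only [Set.mem_setOf_eq, Set.mem_union, not_or, not_not] at h hi
    exact hi (by show a i * b i = 1; rw [h.1, h.2, one_mul])
  inv_mem' := by
    intro a ha
    refine ha.subset ?_
    intro i hi
    simp only [Set.mem_setOf_eq] at hi ⊢
    intro h
    exact hi (by show (a i)⁻¹ = 1; rw [h, inv_one])

lemma acc_lemma {ι Y : Type*} [MetricSpace Y] [TopologicalSpace.SeparableSpace Y]
    {S : Set ι} (hS : ¬ S.Countable) (g : ι → Y) :
    ∃ i ∈ S, ∀ δ > 0, ∃ j ∈ S, j ≠ i ∧ dist (g j) (g i) < δ := by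
  by_contra h
  push_neg at h
  choose! δ hδpos hδ using h
  have hdisj : S.PairwiseDisjoint (fun i => Metric.ball (g i) (δ i / 2)) := by
    intro i hi j hj hij
    simp only [Function.onFun]
    rw [Set.disjoint_left]
    intro z hzi hzj
    simp only [mem_ball] at hzi hzj
    have h1 := hδ i hi j hj hij.symm
    have h2 := hδ j hj i hi hij
    have hd : dist (g j) (g i) ≤ dist z (g j) + dist z (g i) := by
      rw [dist_comm z (g j)]; exact dist_triangle _ _ _
    have hd2 : dist (g i) (g j) = dist (g j) (g i) := dist_comm _ _
    linarith
  have := hdisj.countable_of_isOpen (fun i _ => isOpen_ball)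
    (fun i hi => ⟨g i, mem_ball_self (by linarith [hδpos i hi])⟩)
  exact hS this


open scoped commutatorElement in
theorem stmt_7 [MetricSpace X] [CompactSpace X] {I : Type*} [Uncountable I]
    (G : I → Type*) [∀ i, Group (G i)]
    (hna : ∀ i, ∃ a b : G i, a * b ≠ b * a) :
    ¬ ∃ φ : directSum I G →* (X ≃ₜ X), Function.Injective φ := by
  classical
  rintro ⟨φ, hφ⟩
  choose a b hab using hna
  have hmem : ∀ (i : I) (x : G i), Pi.mulSingle i x ∈ directSum I G := by
    intro i x
    refine (Set.finite_singleton i).subset ?_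
    intro j hj
    simp only [Set.mem_setOf_eq] at hj
    by_contra hji
    exact hj (Pi.mulSingle_eq_of_ne (by simpa using hji) x)
  set Aa : ∀ i : I, directSum I G := fun i => ⟨Pi.mulSingle i (a i), hmem i (a i)⟩ with hAa
  set Bb : ∀ i : I, directSum I G := fun i => ⟨Pi.mulSingle i (b i), hmem i (b i)⟩ with hBb
  -- commutators
  have hcne : ∀ i, ⁅Aa i, Bb i⁆ ≠ 1 := by
    intro i h
    have h2 : ((⁅Aa i, Bb i⁆ : directSum I G) : ∀ k, G k) i = 1 := by rw [h]; rfl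
    have h3 : ((⁅Aa i, Bb i⁆ : directSum I G) : ∀ k, G k) i = ⁅a i, b i⁆ := by
      simp [commutatorElement_def, hAa, hBb, Pi.mul_apply, Pi.inv_apply]
    rw [h3] at h2
    exact hab i (commutatorElement_eq_one_iff_commute.mp h2)
  have hczero : ∀ i j, j ≠ i → ⁅Aa j, Bb i⁆ = 1 := by
    intro i j hji
    rw [commutatorElement_eq_one_iff_commute]
    have : Commute ((Aa j : ∀ k, G k)) ((Bb i : ∀ k, G k)) :=
      Pi.mulSingle_commute hji (a j) (b i)
    exact Subtype.ext this
  -- pass to Homeo and C(X,X)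
  set T : (X ≃ₜ X) → C(X, X) := fun f => ⟨f, f.continuous⟩ with hT
  set u : I → (X ≃ₜ X) := fun i => φ (Aa i) with hu
  set v : I → (X ≃ₜ X) := fun i => φ (Bb i) with hv
  set w : I → (X ≃ₜ X) := fun i => φ ⁅Aa i, Bb i⁆ with hw
  have hwcom : ∀ i, w i = ⁅u i, v i⁆ := fun i => map_commutatorElement φ _ _
  have hwone : ∀ i j, j ≠ i → ⁅u j, v i⁆ = 1 := by
    intro i j hji
    rw [← map_commutatorElement, hczero i j hji, map_one]
  have hwne : ∀ i, w i ≠ 1 := by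
    intro i h
    have h2 : φ ⁅Aa i, Bb i⁆ = φ 1 := by rw [map_one]; exact h
    exact hcne i (hφ h2)
  have hdpos : ∀ i, 0 < dist (T (w i)) (T (1 : X ≃ₜ X)) := by
    intro i
    rw [dist_pos]
    intro h
    exact hwne i (Homeomorph.ext fun x => ContinuousMap.congr_fun h x)
  -- pigeonhole
  set S : ℕ → Set I := fun n => {i | 1 / ((n : ℝ) + 1) < dist (T (w i)) (T 1)} with hS
  have hcover : (Set.univ : Set I) ⊆ ⋃ n, S n := by
    intro i _
    obtain ⟨n, hn⟩ := exists_nat_one_div_lt (hdpos i)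
    exact Set.mem_iUnion.mpr ⟨n, hn⟩
  obtain ⟨n, hn⟩ : ∃ n, ¬ (S n).Countable := by
    by_contra h
    push_neg at h
    have : (Set.univ : Set I).Countable :=
      Set.Countable.mono hcover (Set.countable_iUnion h)
    rw [Set.countable_univ_iff] at this
    exact (not_countable (α := I)) this
  set ε : ℝ := 1 / ((n : ℝ) + 1) with hε
  have hεpos : 0 < ε := by positivity
  -- accumulation point
  obtain ⟨i, hiS, hacc⟩ := acc_lemma hn (fun i => (T (u i), T ((u i)⁻¹)))
  -- uniform continuity of u i ∘ v i
  have hcont : Continuous (fun z : X => u i (v i z)) :=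
    (u i).continuous.comp (v i).continuous
  have huc : UniformContinuous (fun z : X => u i (v i z)) :=
    CompactSpace.uniformContinuous_of_continuous hcont
  obtain ⟨δ₁, hδ₁pos, hδ₁⟩ := Metric.uniformContinuous_iff.mp huc (ε / 2) (by positivity)
  obtain ⟨j, hjS, hji, hjd⟩ := hacc (min δ₁ (ε / 2)) (by positivity)
  -- key estimate
  have hkey : ∀ x : X, dist (w i x) x ≤ ε := by
    intro x
    have hx : x = ⁅u j, v i⁆ x := by rw [hwone i j hji]; rfl
    have happ : ∀ (f g : X ≃ₜ X) (z : X), (f * g) z = f (g z) := fun f g z => rfl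
    have hinv : ∀ (f : X ≃ₜ X) (z : X), (f⁻¹) z = f.symm z := fun f z => rfl
    set y : X := (v i)⁻¹ x with hy
    have hwix : w i x = u i (v i ((u i)⁻¹ y)) := by
      rw [hwcom i, commutatorElement_def, happ, happ, happ]
    have hxx : x = u j (v i ((u j)⁻¹ y)) := by
      conv_lhs => rw [hx]
      rw [commutatorElement_def, happ, happ, happ]
    have hgoal : dist (w i x) x = dist (u i (v i ((u i)⁻¹ y))) (u j (v i ((u j)⁻¹ y))) := by
      rw [hwix]; exact congrArg _ hxx
    rw [hgoal]
    have t1 : dist (u i (v i ((u i)⁻¹ y))) (u i (v i ((u j)⁻¹ y))) < ε / 2 := by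
      apply hδ₁
      calc dist ((u i)⁻¹ y) ((u j)⁻¹ y)
          = dist (T ((u j)⁻¹) y) (T ((u i)⁻¹) y) := by rw [dist_comm]; rfl
        _ ≤ dist (T ((u j)⁻¹)) (T ((u i)⁻¹)) := ContinuousMap.dist_apply_le_dist y
        _ ≤ dist ((T (u j), T ((u j)⁻¹))) ((T (u i), T ((u i)⁻¹))) := by
            rw [Prod.dist_eq]; exact le_max_right _ _
        _ < δ₁ := lt_of_lt_of_le hjd (min_le_left _ _)
    have t2 : dist (u i (v i ((u j)⁻¹ y))) (u j (v i ((u j)⁻¹ y))) < ε / 2 := by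
      calc dist (u i (v i ((u j)⁻¹ y))) (u j (v i ((u j)⁻¹ y)))
          = dist (T (u j) (v i ((u j)⁻¹ y))) (T (u i) (v i ((u j)⁻¹ y))) := by
            rw [dist_comm]; rfl
        _ ≤ dist (T (u j)) (T (u i)) := ContinuousMap.dist_apply_le_dist _
        _ ≤ dist ((T (u j), T ((u j)⁻¹))) ((T (u i), T ((u i)⁻¹))) := by
            rw [Prod.dist_eq]; exact le_max_left _ _
        _ < ε / 2 := lt_of_lt_of_le hjd (min_le_right _ _)
    calc dist (u i (v i ((u i)⁻¹ y))) (u j (v i ((u j)⁻¹ y)))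
        ≤ dist (u i (v i ((u i)⁻¹ y))) (u i (v i ((u j)⁻¹ y)))
          + dist (u i (v i ((u j)⁻¹ y))) (u j (v i ((u j)⁻¹ y))) := dist_triangle _ _ _
      _ ≤ ε := by linarith
  have hle : dist (T (w i)) (T (1 : X ≃ₜ X)) ≤ ε := by
    rw [ContinuousMap.dist_le hεpos.le]
    intro x
    exact hkey x
  have := hiS
  rw [hS] at this
  simp only [Set.mem_setOf_eq] at this
  linarith
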